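/- With σ > 0 and ε > 0 fixed, the normalizing integral of the proper component of the SIC prior diverges as λ → ∞: if (λ_n) is a sequence of positive reals with λ_n → +∞, then ∫_ℝ (exp{(λ_n/(2σ²))·ε²/(β² + ε²)} − 1) dβ → +∞ as n → ∞; equivalently, the normalizing constant c(λ_n, ε) converges to 0. -/

import Mathlib

open Filter MeasureTheory

lemma sic_aux_integrable (ε a : ℝ) (hε : 0 < ε) (ha : 0 < a) :
    Integrable (fun β : ℝ => Real.exp (a * (ε ^ 2 / (β ^ 2 + ε ^ 2))) - 1) := by
  have hint : Integrable (fun β : ℝ => (1 + (β / ε) ^ 2)⁻¹) :=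
    integrable_inv_one_add_sq.comp_div hε.ne'
  refine (hint.const_mul (a * Real.exp a)).mono' ?_ ?_
  · apply Measurable.aestronglyMeasurable
    fun_prop
  · filter_upwards with β
    have hden : 0 < β ^ 2 + ε ^ 2 := by positivity
    have hx0 : 0 < ε ^ 2 / (β ^ 2 + ε ^ 2) := by positivity
    have hx1 : ε ^ 2 / (β ^ 2 + ε ^ 2) ≤ 1 := by
      rw [div_le_one hden]; nlinarith [sq_nonneg β]
    set x := ε ^ 2 / (β ^ 2 + ε ^ 2) with hxdef
    have heq : (1 + (β / ε) ^ 2)⁻¹ = x := by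
      rw [hxdef]
      field_simp
      ring
    rw [heq]
    have hprod : Real.exp (-(a*x)) * Real.exp (a*x) = 1 := by
      rw [← Real.exp_add]; simp
    have h1 : Real.exp (a * x) - 1 ≤ a * x * Real.exp (a * x) := by
      nlinarith [Real.add_one_le_exp (-(a*x)), Real.exp_pos (a*x), hprod]
    have h2 : Real.exp (a * x) ≤ Real.exp a := by
      apply Real.exp_le_exp.2; nlinarith
    have hnn : 0 ≤ Real.exp (a * x) - 1 := by
      have : (1:ℝ) ≤ Real.exp (a * x) := Real.one_le_exp (by positivity)
      linarith
    rw [Real.norm_eq_abs, abs_of_nonneg hnn]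
    calc Real.exp (a * x) - 1 ≤ a * x * Real.exp (a * x) := h1
      _ ≤ a * Real.exp a * x := by nlinarith

theorem sic_normalizing_integral_tendsto_atTop (σ ε : ℝ) (hσ : 0 < σ) (hε : 0 < ε)
    (lam : ℕ → ℝ) (hlam_pos : ∀ n, 0 < lam n)
    (hlam : Tendsto lam atTop atTop) :
    Tendsto (fun n =>
        ∫ β : ℝ, (Real.exp (lam n / (2 * σ ^ 2) * (ε ^ 2 / (β ^ 2 + ε ^ 2))) - 1))
      atTop atTop := by
  have hlow : Tendsto (fun n => (Real.exp (lam n / (4 * σ ^ 2)) - 1) * (2 * ε))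
      atTop atTop := by
    apply Tendsto.atTop_mul_const (by positivity)
    apply tendsto_atTop_add_const_right
    exact Real.tendsto_exp_atTop.comp
      (Tendsto.atTop_div_const (r := 4 * σ ^ 2) (by positivity) hlam)
  refine tendsto_atTop_mono (fun n => ?_) hlow
  set a := lam n / (2 * σ ^ 2) with hadef
  have ha : 0 < a := div_pos (hlam_pos n) (by positivity)
  have hint := sic_aux_integrable ε a hε ha
  have hnn : ∀ β : ℝ, 0 ≤ Real.exp (a * (ε ^ 2 / (β ^ 2 + ε ^ 2))) - 1 := by
    intro β
    have hden : 0 < β ^ 2 + ε ^ 2 := by positivity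
    have : (1:ℝ) ≤ Real.exp (a * (ε ^ 2 / (β ^ 2 + ε ^ 2))) :=
      Real.one_le_exp (by positivity)
    linarith
  have hset : ∫ β in Set.Icc (-ε) ε,
      (Real.exp (a * (ε ^ 2 / (β ^ 2 + ε ^ 2))) - 1) ≤
      ∫ β : ℝ, (Real.exp (a * (ε ^ 2 / (β ^ 2 + ε ^ 2))) - 1) := by
    apply setIntegral_le_integral hint
    filter_upwards with β using hnn β
  have hmeas : (volume (Set.Icc (-ε) ε)).toReal = 2 * ε := by
    rw [Real.volume_Icc]
    rw [ENNReal.toReal_ofReal (by linarith)]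
    ring
  have hconst : (Real.exp (lam n / (4 * σ ^ 2)) - 1) * (2 * ε) ≤
      ∫ β in Set.Icc (-ε) ε, (Real.exp (a * (ε ^ 2 / (β ^ 2 + ε ^ 2))) - 1) := by
    have := MeasureTheory.setIntegral_ge_of_const_le (μ := volume)
      (s := Set.Icc (-ε) ε) measurableSet_Icc
      (by rw [Real.volume_Icc]; exact ENNReal.ofReal_ne_top)
      (c := Real.exp (lam n / (4 * σ ^ 2)) - 1)
      (f := fun β => Real.exp (a * (ε ^ 2 / (β ^ 2 + ε ^ 2))) - 1)
      (fun β hβ => by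
        have hβ2 : β ^ 2 ≤ ε ^ 2 := by
          exact sq_le_sq' hβ.1 hβ.2
        have hden : 0 < β ^ 2 + ε ^ 2 := by positivity
        have hhalf : (1:ℝ)/2 ≤ ε ^ 2 / (β ^ 2 + ε ^ 2) := by
          rw [div_le_div_iff₀ (by norm_num) hden]; nlinarith
        have : lam n / (4 * σ ^ 2) ≤ a * (ε ^ 2 / (β ^ 2 + ε ^ 2)) := by
          rw [hadef]
          have h0 : 0 < lam n := hlam_pos n
          calc lam n / (4 * σ ^ 2) = lam n / (2 * σ ^ 2) * (1/2) := by ring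
            _ ≤ lam n / (2 * σ ^ 2) * (ε ^ 2 / (β ^ 2 + ε ^ 2)) := by
                apply mul_le_mul_of_nonneg_left hhalf (by positivity)
        have := Real.exp_le_exp.2 this
        linarith)
      hint.integrableOn
    change (volume (Set.Icc (-ε) ε)).toReal • _ ≤ _ at this
    rw [hmeas, smul_eq_mul, mul_comm (2 * ε)] at this
    exact this
  calc (Real.exp (lam n / (4 * σ ^ 2)) - 1) * (2 * ε)
      ≤ ∫ β in Set.Icc (-ε) ε, (Real.exp (a * (ε ^ 2 / (β ^ 2 + ε ^ 2))) - 1) := hconst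
    _ ≤ _ := hset
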